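/- If the closed convex hull of the support of μ has nonempty interior in V*, then L(μ) and log L(μ) are strictly convex on the convex set D_μ = {v : L(μ)(v) < ∞} (whenever D_μ has at least two points). -/

import Mathlib

open MeasureTheory Filter Topology
open scoped ENNReal

/-- The support of a Borel measure: points all of whose open neighborhoods
have positive measure. -/
def msupport {W : Type*} [TopologicalSpace W] [MeasurableSpace W]
    (μ : Measure W) : Set W :=
  {x | ∀ U : Set W, IsOpen U → x ∈ U → μ U ≠ 0}

/-- Strict weighted AM-GM for two distinct positive reals. -/
lemma young_strict {a b s t : ℝ} (ha : 0 < a) (hb : 0 < b) (hab : a + b = 1)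
    (hs : 0 < s) (ht : 0 < t) (hst : s ≠ t) : s ^ a * t ^ b < a * s + b * t := by
  have hlog : Real.log s ≠ Real.log t := by
    intro h
    exact hst (by rw [← Real.exp_log hs, h, Real.exp_log ht])
  have hconv := strictConvexOn_exp.2 (Set.mem_univ (Real.log s)) (Set.mem_univ (Real.log t))
    hlog ha hb hab
  have h1 : s ^ a * t ^ b = Real.exp (a • Real.log s + b • Real.log t) := by
    rw [Real.exp_add, smul_eq_mul, smul_eq_mul, mul_comm a, mul_comm b,
      Real.exp_mul, Real.exp_mul, Real.exp_log hs, Real.exp_log ht]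
  rw [h1]
  calc Real.exp (a • Real.log s + b • Real.log t)
      < a • Real.exp (Real.log s) + b • Real.exp (Real.log t) := hconv
    _ = a * s + b * t := by rw [Real.exp_log hs, Real.exp_log ht, smul_eq_mul, smul_eq_mul]

/-- A level set of a nonzero evaluation functional has empty interior. -/
lemma interior_level_empty {V : Type*} [NormedAddCommGroup V] [NormedSpace ℝ V]
    (v : V) (hv : v ≠ 0) (c : ℝ) :
    interior {α : V →L[ℝ] ℝ | α v = c} = ∅ := by
  by_contra h
  obtain ⟨α₀, hα₀⟩ := Set.nonempty_iff_ne_empty.2 h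
  rw [mem_interior_iff_mem_nhds, Metric.mem_nhds_iff] at hα₀
  obtain ⟨ε, hε, hball⟩ := hα₀
  obtain ⟨g, hg1, hgv⟩ := exists_dual_vector ℝ v (norm_ne_zero_iff.2 hv)
  have hgv' : g v = ‖v‖ := by exact_mod_cast hgv
  set t : ℝ := ε / 2 with ht
  have htpos : 0 < t := by positivity
  have hmem : α₀ + t • g ∈ Metric.ball α₀ ε := by
    rw [Metric.mem_ball, dist_eq_norm]
    have h' : α₀ + t • g - α₀ = t • g := by abel
    rw [h']
    have : ‖t • g‖ = |t| * ‖g‖ := norm_smul t g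
    rw [this, hg1, abs_of_pos htpos]
    linarith
  have h1 : (α₀ + t • g) v = c := hball hmem
  have h2 : (α₀ + t • g) v = c + t * ‖v‖ := by
    have hα₀v : α₀ v = c := by
      have : α₀ ∈ Metric.ball α₀ ε := Metric.mem_ball_self hε
      exact hball this
    simp [ContinuousLinearMap.add_apply, ContinuousLinearMap.smul_apply, hα₀v, hgv',
      smul_eq_mul]
  have : t * ‖v‖ = 0 := by linarith [h1, h2]
  rcases mul_eq_zero.1 this with h | h
  · exact htpos.ne' h
  · exact hv (norm_eq_zero.1 h)

theorem laplace_strictly_convex {V : Type*} [NormedAddCommGroup V]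
    [NormedSpace ℝ V] [FiniteDimensional ℝ V]
    [MeasurableSpace (V →L[ℝ] ℝ)] [BorelSpace (V →L[ℝ] ℝ)]
    (μ : Measure (V →L[ℝ] ℝ))
    (hint : (interior (closure (convexHull ℝ (msupport μ)))).Nonempty)
    (L : V → ℝ≥0∞)
    (hL : ∀ v, L v = ∫⁻ α, ENNReal.ofReal (Real.exp (-(α v))) ∂μ) :
    ∀ x y : V, L x < ⊤ → L y < ⊤ → x ≠ y → ∀ a b : ℝ, 0 < a → 0 < b → a + b = 1 →
      L (a • x + b • y) < ENNReal.ofReal a * L x + ENNReal.ofReal b * L y ∧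
      L (a • x + b • y) < L x ^ a * L y ^ b := by
  intro x y hLx hLy hxy a b ha hb hab
  -- evaluation maps are measurable
  have mev : ∀ v : V, Measurable (fun α : V →L[ℝ] ℝ => α v) := fun v =>
    (ContinuousLinearMap.continuous (ContinuousLinearMap.apply ℝ ℝ v)).measurable
  have mrpow : ∀ (h : (V →L[ℝ] ℝ) → ℝ), Measurable h → (∀ s, 0 < h s) → ∀ (c : ℝ),
      Measurable (fun s => h s ^ c) := by
    intro h mh hp c
    have : (fun s => h s ^ c) = fun s => Real.exp (Real.log (h s) * c) :=
      funext fun s => Real.rpow_def_of_pos (hp s) c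
    rw [this]
    exact Real.measurable_exp.comp ((Real.measurable_log.comp mh).mul_const c)
  -- the measure is nonzero
  have hμ : μ Set.univ ≠ 0 := by
    intro h0
    have hempty : msupport μ = ∅ := Set.eq_empty_iff_forall_notMem.2
      (fun z hz => hz _ isOpen_univ (Set.mem_univ z) h0)
    rw [hempty] at hint
    simp [convexHull_empty] at hint
  -- positivity of L
  have hpos : ∀ v : V, 0 < L v := by
    intro v
    rw [hL v]
    have m : Measurable (fun α : V →L[ℝ] ℝ => ENNReal.ofReal (Real.exp (-(α v)))) :=
      (Real.measurable_exp.comp (mev v).neg).ennreal_ofReal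
    rw [lintegral_pos_iff_support m]
    have hsup : Function.support (fun α : V →L[ℝ] ℝ => ENNReal.ofReal (Real.exp (-(α v))))
        = Set.univ := by
      ext α
      simp [Function.support, ENNReal.ofReal_eq_zero, not_le, Real.exp_pos]
    rw [hsup]
    exact pos_iff_ne_zero.2 hμ
  set Ix : ℝ := (L x).toReal with hIxdef
  set Iy : ℝ := (L y).toReal with hIydef
  have hIx : 0 < Ix := ENNReal.toReal_pos (hpos x).ne' hLx.ne
  have hIy : 0 < Iy := ENNReal.toReal_pos (hpos y).ne' hLy.ne
  have hLx' : L x = ENNReal.ofReal Ix := (ENNReal.ofReal_toReal hLx.ne).symm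
  have hLy' : L y = ENNReal.ofReal Iy := (ENNReal.ofReal_toReal hLy.ne).symm
  set f : (V →L[ℝ] ℝ) → ℝ := fun α => Real.exp (-(α x)) / Ix with hfdef
  set g : (V →L[ℝ] ℝ) → ℝ := fun α => Real.exp (-(α y)) / Iy with hgdef
  have hfpos : ∀ α, 0 < f α := fun α => div_pos (Real.exp_pos _) hIx
  have hgpos : ∀ α, 0 < g α := fun α => div_pos (Real.exp_pos _) hIy
  have mf : Measurable f := ((mev x).neg.exp).div_const Ix
  have mg : Measurable g := ((mev y).neg.exp).div_const Iy
  have mfg : Measurable (fun α => f α ^ a * g α ^ b) :=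
    (mrpow f mf hfpos a).mul (mrpow g mg hgpos b)
  -- normalized integrals equal 1
  have Jf : ∫⁻ α, ENNReal.ofReal (f α) ∂μ = 1 := by
    have : ∀ α, ENNReal.ofReal (f α) = ENNReal.ofReal Ix⁻¹ * ENNReal.ofReal (Real.exp (-(α x))) := by
      intro α
      rw [← ENNReal.ofReal_mul (by positivity)]
      congr 1
      exact div_eq_inv_mul _ _
    simp_rw [this]
    rw [lintegral_const_mul (f := fun α : V →L[ℝ] ℝ => ENNReal.ofReal (Real.exp (-(α x)))) _ ((mev x).neg.exp).ennreal_ofReal, ← hL x,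
      hLx', ← ENNReal.ofReal_mul (by positivity), inv_mul_cancel₀ hIx.ne']
    simp
  have Jg : ∫⁻ α, ENNReal.ofReal (g α) ∂μ = 1 := by
    have : ∀ α, ENNReal.ofReal (g α) = ENNReal.ofReal Iy⁻¹ * ENNReal.ofReal (Real.exp (-(α y))) := by
      intro α
      rw [← ENNReal.ofReal_mul (by positivity)]
      congr 1
      exact div_eq_inv_mul _ _
    simp_rw [this]
    rw [lintegral_const_mul (f := fun α : V →L[ℝ] ℝ => ENNReal.ofReal (Real.exp (-(α y)))) _ ((mev y).neg.exp).ennreal_ofReal, ← hL y,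
      hLy', ← ENNReal.ofReal_mul (by positivity), inv_mul_cancel₀ hIy.ne']
    simp
  set φ : (V →L[ℝ] ℝ) → ℝ := fun α => a * f α + b * g α - f α ^ a * g α ^ b with hφdef
  have hφ0 : ∀ α, 0 ≤ φ α := fun α => sub_nonneg.2
    (Real.geom_mean_le_arith_mean2_weighted ha.le hb.le (hfpos α).le (hgpos α).le hab)
  have mφ : Measurable φ := (((mf.const_mul a).add (mg.const_mul b)).sub mfg)
  -- sum identity
  have hsum : ∫⁻ α, ENNReal.ofReal (f α ^ a * g α ^ b) ∂μ + ∫⁻ α, ENNReal.ofReal (φ α) ∂μ = 1 := by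
    rw [← lintegral_add_left mfg.ennreal_ofReal]
    have : ∀ α, ENNReal.ofReal (f α ^ a * g α ^ b) + ENNReal.ofReal (φ α)
        = ENNReal.ofReal a * ENNReal.ofReal (f α) + ENNReal.ofReal b * ENNReal.ofReal (g α) := by
      intro α
      rw [← ENNReal.ofReal_add (by positivity) (hφ0 α),
        ← ENNReal.ofReal_mul ha.le, ← ENNReal.ofReal_mul hb.le,
        ← ENNReal.ofReal_add (by positivity) (by positivity)]
      congr 1
      simp only [hφdef]
      ring
    simp_rw [this]
    rw [lintegral_add_left ((mf.ennreal_ofReal).const_mul _),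
      lintegral_const_mul _ mf.ennreal_ofReal, lintegral_const_mul _ mg.ennreal_ofReal,
      Jf, Jg, mul_one, mul_one, ← ENNReal.ofReal_add ha.le hb.le, hab]
    simp
  set I : ℝ≥0∞ := ∫⁻ α, ENNReal.ofReal (f α ^ a * g α ^ b) ∂μ with hIdef
  set Φ : ℝ≥0∞ := ∫⁻ α, ENNReal.ofReal (φ α) ∂μ with hΦdef
  -- the defect integral is nonzero
  have hΦne : Φ ≠ 0 := by
    intro h0
    have hae : ∀ᵐ α ∂μ, ENNReal.ofReal (φ α) = 0 := (lintegral_eq_zero_iff mφ.ennreal_ofReal).1 h0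
    have haefg : ∀ᵐ α ∂μ, f α = g α := by
      filter_upwards [hae] with α hα
      by_contra hne
      have := young_strict ha hb hab (hfpos α) (hgpos α) hne
      have hφpos : 0 < φ α := by simp only [hφdef]; linarith
      rw [ENNReal.ofReal_eq_zero] at hα
      linarith
    set c : ℝ := Real.log Ix - Real.log Iy with hcdef
    have haec : ∀ᵐ α ∂μ, α (y - x) = c := by
      filter_upwards [haefg] with α hα
      have h1 : Real.log (f α) = Real.log (g α) := by rw [hα]
      have h2 : -(α x) - Real.log Ix = -(α y) - Real.log Iy := by
        rw [hfdef, hgdef] at h1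
        simp only at h1
        rwa [Real.log_div (Real.exp_ne_zero _) hIx.ne', Real.log_div (Real.exp_ne_zero _) hIy.ne',
          Real.log_exp, Real.log_exp] at h1
      rw [map_sub, hcdef]
      linarith
    set S : Set (V →L[ℝ] ℝ) := {α | α (y - x) = c} with hSdef
    have hScont : Continuous (fun α : V →L[ℝ] ℝ => α (y - x)) :=
      ContinuousLinearMap.continuous (ContinuousLinearMap.apply ℝ ℝ (y - x))
    have hSclosed : IsClosed S := isClosed_eq hScont continuous_const
    have hSnull : μ Sᶜ = 0 := by
      rw [ae_iff] at haec
      exact haec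
    have hsupp : msupport μ ⊆ S := by
      intro z hz
      by_contra hzS
      exact hz Sᶜ hSclosed.isOpen_compl hzS hSnull
    have hSconv : Convex ℝ S :=
      convex_hyperplane ⟨fun α β => by simp, fun s α => by simp⟩ c
    have hsub : closure (convexHull ℝ (msupport μ)) ⊆ S :=
      closure_minimal (convexHull_min hsupp hSconv) hSclosed
    obtain ⟨p, hp⟩ := hint
    have hpS := interior_mono hsub hp
    rw [interior_level_empty (y - x) (sub_ne_zero.2 (Ne.symm hxy)) c] at hpS
    exact hpS
  have hIne : I ≠ ⊤ := by
    refine ne_top_of_le_ne_top ENNReal.one_ne_top ?_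
    rw [← hsum]
    exact le_self_add
  have hI1 : I < 1 := by
    calc I < I + Φ := ENNReal.lt_add_right hIne hΦne
      _ = 1 := hsum
  -- key identity for L at the midpoint
  have hmid : L (a • x + b • y) = ENNReal.ofReal (Ix ^ a * Iy ^ b) * I := by
    rw [hL, hIdef, ← lintegral_const_mul _ mfg.ennreal_ofReal]
    congr 1
    ext α
    rw [← ENNReal.ofReal_mul (by positivity)]
    congr 1
    have hval : α (a • x + b • y) = a * α x + b * α y := by
      rw [map_add]
      simp
    rw [hval]
    have hfa : f α ^ a = Real.exp (-(α x)) ^ a / Ix ^ a :=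
      Real.div_rpow (Real.exp_pos _).le hIx.le a
    have hgb : g α ^ b = Real.exp (-(α y)) ^ b / Iy ^ b :=
      Real.div_rpow (Real.exp_pos _).le hIy.le b
    have hea : Real.exp (-(α x)) ^ a = Real.exp (a * -(α x)) := by
      rw [mul_comm, Real.exp_mul]
    have heb : Real.exp (-(α y)) ^ b = Real.exp (b * -(α y)) := by
      rw [mul_comm, Real.exp_mul]
    rw [hfa, hgb, hea, heb]
    have hIxa : (0:ℝ) < Ix ^ a := Real.rpow_pos_of_pos hIx a
    have hIyb : (0:ℝ) < Iy ^ b := Real.rpow_pos_of_pos hIy b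
    have : Real.exp (-(a * α x + b * α y)) = Real.exp (a * -(α x)) * Real.exp (b * -(α y)) := by
      rw [← Real.exp_add]
      congr 1
      ring
    rw [this]
    field_simp
  -- second (stronger) inequality
  have hfac0 : ENNReal.ofReal (Ix ^ a * Iy ^ b) ≠ 0 :=
    (ENNReal.ofReal_pos.2 (by positivity)).ne'
  have h2 : L (a • x + b • y) < L x ^ a * L y ^ b := by
    rw [hmid, hLx', hLy', ENNReal.ofReal_rpow_of_pos hIx, ENNReal.ofReal_rpow_of_pos hIy,
      ← ENNReal.ofReal_mul (by positivity)]
    calc ENNReal.ofReal (Ix ^ a * Iy ^ b) * I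
        < ENNReal.ofReal (Ix ^ a * Iy ^ b) * 1 :=
          ENNReal.mul_lt_mul_right hfac0 ENNReal.ofReal_ne_top hI1
      _ = ENNReal.ofReal (Ix ^ a * Iy ^ b) := mul_one _
  refine ⟨lt_of_lt_of_le h2 ?_, h2⟩
  rw [hLx', hLy', ENNReal.ofReal_rpow_of_pos hIx, ENNReal.ofReal_rpow_of_pos hIy,
    ← ENNReal.ofReal_mul (by positivity), ← ENNReal.ofReal_mul ha.le, ← ENNReal.ofReal_mul hb.le,
    ← ENNReal.ofReal_add (by positivity) (by positivity)]
  exact ENNReal.ofReal_le_ofReal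
    (Real.geom_mean_le_arith_mean2_weighted ha.le hb.le hIx.le hIy.le hab)
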